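/- Let G be a connected weighted multigraph with nonempty vertex set and let O be an orientation of G. Then the following are equivalent: (i) there exists a nonempty subset S ⊆ V such that the induced subgraph of G on S is connected, every edge of the cut of S has its head in S, and for every v ∈ S one has g_v − 1 + indeg_{O,S}(v) ≥ 0, where indeg_{O,S}(v) is the number of edges in E(S) with head v; (ii) some vertex of G has weight g_v ≥ 1, or O contains a directed cycle. -/

import Mathlib

open Finset

/-- A multigraph on vertex type `V` with edge type `E`: each edge `e` joins the
(possibly equal) vertices `fst e` and `snd e` (loops and multiple edges allowed). -/
structure Multigraph (V E : Type) where
  fst : E → V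
  snd : E → V

/-- An orientation of a multigraph: each edge gets a tail and a head, which are its
two endpoints (in one of the two possible orders). -/
structure GraphOrientation {V E : Type} (G : Multigraph V E) where
  tail : E → V
  head : E → V
  compat : ∀ e, (tail e = G.fst e ∧ head e = G.snd e) ∨ (tail e = G.snd e ∧ head e = G.fst e)

variable {V E : Type} [Fintype V] [Fintype E] [DecidableEq V] [DecidableEq E]

namespace Multigraph

/-- `E(S)`: the set of edges with both endpoints in `S`. -/
def edgesIn (G : Multigraph V E) (S : Finset V) : Finset E :=
  univ.filter fun e => G.fst e ∈ S ∧ G.snd e ∈ S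

/-- Membership in the cut of `S`: exactly one endpoint of `e` lies in `S`. -/
def InCut (G : Multigraph V E) (S : Finset V) (e : E) : Prop :=
  (G.fst e ∈ S ∧ G.snd e ∉ S) ∨ (G.fst e ∉ S ∧ G.snd e ∈ S)

instance (G : Multigraph V E) (S : Finset V) : DecidablePred (G.InCut S) := fun e =>
  decidable_of_iff ((G.fst e ∈ S ∧ G.snd e ∉ S) ∨ (G.fst e ∉ S ∧ G.snd e ∈ S)) Iff.rfl

/-- `ε(S)`: the number of edges with exactly one endpoint in `S`. -/
def cutCard (G : Multigraph V E) (S : Finset V) : ℕ :=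
  (univ.filter fun e => G.InCut S e).card

/-- The genus `g(S) = |E(S)| - |S| + 1 + Σ_{v ∈ S} g_v` of a subset of vertices,
for the vertex weight function `w`. -/
def genusOf (G : Multigraph V E) (w : V → ℕ) (S : Finset V) : ℤ :=
  ((G.edgesIn S).card : ℤ) - S.card + 1 + ∑ v ∈ S, (w v : ℤ)

/-- The genus of the weighted multigraph. -/
def genus (G : Multigraph V E) (w : V → ℕ) : ℤ := G.genusOf w univ

/-- The valence of a vertex: the number of edge-ends at it (a loop counts twice). -/
def valence (G : Multigraph V E) (v : V) : ℕ :=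
  (univ.filter fun e => G.fst e = v).card + (univ.filter fun e => G.snd e = v).card

/-- Adjacency via some edge. -/
def Adj (G : Multigraph V E) (a b : V) : Prop :=
  ∃ e, (G.fst e = a ∧ G.snd e = b) ∨ (G.fst e = b ∧ G.snd e = a)

/-- The multigraph is connected: nonempty, and any two vertices are joined by a path. -/
def Connected (G : Multigraph V E) : Prop :=
  Nonempty V ∧ ∀ a b : V, Relation.ReflTransGen G.Adj a b

/-- Adjacency inside the induced subgraph on `S` (via an edge of `E(S)`). -/
def AdjOn (G : Multigraph V E) (S : Finset V) (a b : V) : Prop :=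
  ∃ e, ((G.fst e = a ∧ G.snd e = b) ∨ (G.fst e = b ∧ G.snd e = a)) ∧
    G.fst e ∈ S ∧ G.snd e ∈ S

/-- The induced subgraph on `S` is connected. -/
def ConnectedOn (G : Multigraph V E) (S : Finset V) : Prop :=
  ∀ a ∈ S, ∀ b ∈ S, Relation.ReflTransGen (G.AdjOn S) a b

/-- The weighted multigraph is stable: connected, of genus at least 2, and every
vertex of weight 0 has valence at least 3. -/
def IsStable (G : Multigraph V E) (w : V → ℕ) : Prop :=
  G.Connected ∧ 2 ≤ G.genus w ∧ ∀ v, w v = 0 → 3 ≤ G.valence v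

/-- A multidegree `d : V → ℤ` of total degree `δ = ∑ v, d v` is semistable if for every
nonempty `S ⊆ V`:
`(2g-2)(g(S)-1) + (δ-g+1)(2g(S)-2+ε(S)) ≤ (2g-2) Σ_{v ∈ S} d v`. -/
def Semistable (G : Multigraph V E) (w : V → ℕ) (d : V → ℤ) : Prop :=
  ∀ S : Finset V, S.Nonempty →
    (2 * G.genus w - 2) * (G.genusOf w S - 1) +
      ((∑ v, d v) - G.genus w + 1) * (2 * G.genusOf w S - 2 + (G.cutCard S : ℤ)) ≤
    (2 * G.genus w - 2) * ∑ v ∈ S, d v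

/-- A multidegree is stable if it is semistable and the semistability inequality is
strict for every nonempty proper subset of vertices. -/
def StableDeg (G : Multigraph V E) (w : V → ℕ) (d : V → ℤ) : Prop :=
  G.Semistable w d ∧ ∀ S : Finset V, S.Nonempty → S ≠ univ →
    (2 * G.genus w - 2) * (G.genusOf w S - 1) +
      ((∑ v, d v) - G.genus w + 1) * (2 * G.genusOf w S - 2 + (G.cutCard S : ℤ)) <
    (2 * G.genus w - 2) * ∑ v ∈ S, d v

/-- A multidegree is effective if it is nonnegative at every vertex. -/
def Effective (d : V → ℤ) : Prop := ∀ v, 0 ≤ d v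

end Multigraph

namespace GraphOrientation

variable {G : Multigraph V E}

/-- The indegree of a vertex: the number of edges with head `v`. -/
def indeg (O : GraphOrientation G) (v : V) : ℕ :=
  (univ.filter fun e => O.head e = v).card

/-- The multidegree `d_O` associated to an orientation: `d_O(v) = g_v - 1 + indeg_O(v)`. -/
def multidegree (O : GraphOrientation G) (w : V → ℕ) : V → ℤ :=
  fun v => (w v : ℤ) - 1 + (O.indeg v : ℤ)

/-- The edge `e₀` lies on a directed cycle of `O`: there are `k ≥ 1` distinct vertices
`vs` and distinct edges `es`, with `es i` directed from `vs i` to `vs (i+1)`,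
one of the edges being `e₀`. -/
def EdgeInCycle (O : GraphOrientation G) (e₀ : E) : Prop :=
  ∃ (k : ℕ) (vs : Fin (k + 1) → V) (es : Fin (k + 1) → E),
    Function.Injective vs ∧ Function.Injective es ∧ (∃ i, es i = e₀) ∧
    ∀ i, O.tail (es i) = vs i ∧ O.head (es i) = vs (i + 1)

/-- The orientation contains a directed cycle. -/
def HasDirectedCycle (O : GraphOrientation G) : Prop :=
  ∃ (k : ℕ) (vs : Fin (k + 1) → V) (es : Fin (k + 1) → E),
    Function.Injective vs ∧ Function.Injective es ∧
    ∀ i, O.tail (es i) = vs i ∧ O.head (es i) = vs (i + 1)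

/-- The orientation is acyclic: it contains no directed cycle. -/
def Acyclic (O : GraphOrientation G) : Prop := ¬ O.HasDirectedCycle

/-- The orientation is totally cyclic: every edge lies on a directed cycle. -/
def TotallyCyclic (O : GraphOrientation G) : Prop := ∀ e, O.EdgeInCycle e

/-- The cut of `S` is directed towards `S`: every edge of the cut has its head in `S`. -/
def CutTowards (O : GraphOrientation G) (S : Finset V) : Prop :=
  ∀ e, G.InCut S e → O.head e ∈ S

/-- The cut of `S` is directed away from `S`: every edge of the cut has its tail in `S`. -/
def CutAway (O : GraphOrientation G) (S : Finset V) : Prop :=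
  ∀ e, G.InCut S e → O.tail e ∈ S

end GraphOrientation

namespace GraphOrientation

variable {G : Multigraph V E}

/-- The step relation of an orientation: `a` steps to `b` if some edge goes from `a` to `b`. -/
def Step (O : GraphOrientation G) (a b : V) : Prop := ∃ e, O.tail e = a ∧ O.head e = b

lemma ends_iff (O : GraphOrientation G) (e : E) (S : Finset V) :
    (G.fst e ∈ S ∧ G.snd e ∈ S) ↔ (O.tail e ∈ S ∧ O.head e ∈ S) := by
  rcases O.compat e with ⟨h1, h2⟩ | ⟨h1, h2⟩ <;> rw [h1, h2] <;> tauto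

lemma adjOn_of_edge (O : GraphOrientation G) {S : Finset V} (e : E)
    (hf : G.fst e ∈ S) (hs : G.snd e ∈ S) : G.AdjOn S (O.tail e) (O.head e) := by
  refine ⟨e, ?_, hf, hs⟩
  rcases O.compat e with ⟨h1, h2⟩ | ⟨h1, h2⟩
  · exact Or.inl ⟨h1.symm, h2.symm⟩
  · exact Or.inr ⟨h2.symm, h1.symm⟩

/-- Forward-closure construction: if `v₀` either has weight ≥ 1 or receives an edge
whose tail is reachable from `v₀`, then a good subset exists. -/
lemma good_subset_of (O : GraphOrientation G) (w : V → ℕ) (v₀ : V)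
    (H : 1 ≤ w v₀ ∨ ∃ e, O.head e = v₀ ∧ Relation.ReflTransGen O.Step v₀ (O.tail e)) :
    ∃ S : Finset V, S.Nonempty ∧ G.ConnectedOn S ∧
      (∀ e, G.InCut S e → O.head e ∈ S) ∧
      ∀ v ∈ S, 0 ≤ (w v : ℤ) - 1 +
        ((univ.filter fun e => O.head e = v ∧ G.fst e ∈ S ∧ G.snd e ∈ S).card : ℤ) := by
  classical
  set S : Finset V := univ.filter fun u => Relation.ReflTransGen O.Step v₀ u with hSdef
  have hmem : ∀ u, u ∈ S ↔ Relation.ReflTransGen O.Step v₀ u := by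
    intro u; simp [hSdef]
  have hv₀ : v₀ ∈ S := (hmem v₀).2 .refl
  have hclosed : ∀ e, O.tail e ∈ S → O.head e ∈ S := by
    intro e he
    exact (hmem _).2 (((hmem _).1 he).tail ⟨e, rfl, rfl⟩)
  have hconn0 : ∀ u, Relation.ReflTransGen O.Step v₀ u →
      Relation.ReflTransGen (G.AdjOn S) v₀ u := by
    intro u h
    induction h with
    | refl => exact .refl
    | @tail b c h1 h2 ih =>
      obtain ⟨e, het, heh⟩ := h2
      have hbS : O.tail e ∈ S := by rw [het]; exact (hmem _).2 h1
      have hcS : O.head e ∈ S := hclosed e hbS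
      have hends := (O.ends_iff e S).2 ⟨hbS, hcS⟩
      have hadj := O.adjOn_of_edge e hends.1 hends.2
      rw [het, heh] at hadj
      exact ih.tail hadj
  have hsymm : Symmetric (G.AdjOn S) := by
    rintro a b ⟨e, h, hf, hs⟩
    exact ⟨e, h.symm, hf, hs⟩
  refine ⟨S, ⟨v₀, hv₀⟩, ?_, ?_, ?_⟩
  · intro a ha b hb
    exact ((by haveI : Std.Symm (G.AdjOn S) := ⟨hsymm⟩; exact (Relation.ReflTransGen.symmetric (r := G.AdjOn S)).symm _ _ (hconn0 a ((hmem a).1 ha))) : Relation.ReflTransGen (G.AdjOn S) a v₀).trans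
      (hconn0 b ((hmem b).1 hb))
  · intro e he
    by_cases ht : O.tail e ∈ S
    · exact hclosed e ht
    · rcases he with ⟨hf, hs⟩ | ⟨hf, hs⟩ <;>
        rcases O.compat e with ⟨h1, h2⟩ | ⟨h1, h2⟩ <;> rw [h1] at ht <;> rw [h2] <;> tauto
  · intro u hu
    have key : 1 ≤ w u ∨ ∃ e, O.head e = u ∧ G.fst e ∈ S ∧ G.snd e ∈ S := by
      rcases ((hmem u).1 hu).cases_tail with heq | ⟨c, h1, e, het, heh⟩
      · subst heq
        rcases H with hw | ⟨e, heh, hreach⟩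
        · exact Or.inl hw
        · refine Or.inr ⟨e, heh, (O.ends_iff e S).2 ⟨(hmem _).2 hreach, by rw [heh]; exact hu⟩⟩
      · have htS : O.tail e ∈ S := by rw [het]; exact (hmem _).2 h1
        exact Or.inr ⟨e, heh, (O.ends_iff e S).2 ⟨htS, by rw [heh]; exact hu⟩⟩
    rcases key with hw | ⟨e, he⟩
    · have h1 : (1 : ℤ) ≤ (w u : ℤ) := by exact_mod_cast hw
      have h2 : (0 : ℤ) ≤ ((univ.filter fun e => O.head e = u ∧ G.fst e ∈ S ∧ G.snd e ∈ S).card : ℤ) :=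
        Int.natCast_nonneg _
      omega
    · have hmem' : e ∈ univ.filter fun e => O.head e = u ∧ G.fst e ∈ S ∧ G.snd e ∈ S := by
        simp [he.1, he.2.1, he.2.2]
      have hcard : 1 ≤ (univ.filter fun e => O.head e = u ∧ G.fst e ∈ S ∧ G.snd e ∈ S).card :=
        Finset.card_pos.2 ⟨e, hmem'⟩
      have h1 : (1 : ℤ) ≤ ((univ.filter fun e => O.head e = u ∧ G.fst e ∈ S ∧ G.snd e ∈ S).card : ℤ) := by
        exact_mod_cast hcard
      have h2 : (0 : ℤ) ≤ (w u : ℤ) := Int.natCast_nonneg _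
      omega

/-- If every vertex of a nonempty set `S` receives an edge with tail in `S`,
then the orientation has a directed cycle. -/
lemma hasDirectedCycle_of_in_edges (O : GraphOrientation G) (S : Finset V) (hne : S.Nonempty)
    (h : ∀ v ∈ S, ∃ e, O.head e = v ∧ O.tail e ∈ S) : O.HasDirectedCycle := by
  classical
  choose ed hed1 hed2 using h
  let f : {v : V // v ∈ S} → {v : V // v ∈ S} := fun t => ⟨O.tail (ed t.1 t.2), hed2 t.1 t.2⟩
  obtain ⟨x₀, hx₀⟩ := hne
  set x : {v : V // v ∈ S} := ⟨x₀, hx₀⟩ with hxdef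
  -- find a periodic point
  have hnotinj : ¬ Function.Injective
      (fun n : Fin (Fintype.card {v : V // v ∈ S} + 1) => f^[n.val] x) := by
    intro hinj
    have := Fintype.card_le_of_injective _ hinj
    simp at this
  rw [Function.not_injective_iff] at hnotinj
  obtain ⟨a, b, hab, habne⟩ := hnotinj
  -- get m < n with equal iterates
  have hper : ∃ n, 0 < n ∧ ∃ y, f^[n] y = y := by
    rcases lt_or_gt_of_ne habne with hlt | hlt
    · refine ⟨b.val - a.val, by omega, f^[a.val] x, ?_⟩
      rw [← Function.iterate_add_apply]
      have : b.val - a.val + a.val = b.val := by omega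
      rw [this, hab]
    · refine ⟨a.val - b.val, by omega, f^[b.val] x, ?_⟩
      rw [← Function.iterate_add_apply]
      have : a.val - b.val + b.val = a.val := by omega
      rw [this, ← hab]
  obtain ⟨n₀, hn₀pos, y₀, hy₀⟩ := hper
  have hP : ∃ n, 0 < n ∧ f^[n] y₀ = y₀ := ⟨n₀, hn₀pos, hy₀⟩
  set p := Nat.find hP with hpdef
  obtain ⟨hppos, hpfix⟩ := Nat.find_spec hP
  set y := y₀ with hydef
  set u : ℕ → {v : V // v ∈ S} := fun j => f^[j] y with hudef
  have hup : ∀ j, u (j + p) = u j := by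
    intro j
    show f^[j + p] y = f^[j] y
    rw [Function.iterate_add_apply, hpfix]
  have huinj : ∀ a b, a < p → b < p → u a = u b → a = b := by
    have key : ∀ a b, a < b → b < p → u a ≠ u b := by
      intro a b hab hbp heq
      have h1 : u (a + (p - b)) = u 0 := by
        have e1 : u (a + (p - b)) = f^[p - b] (u a) := by
          show f^[a + (p - b)] y = f^[p - b] (f^[a] y)
          rw [← Function.iterate_add_apply, Nat.add_comm]
        have e2 : f^[p - b] (u b) = u 0 := by
          show f^[p - b] (f^[b] y) = f^[0] y
          rw [← Function.iterate_add_apply]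
          have hpb : p - b + b = p := by omega
          rw [hpb]
          show f^[p] y = y
          exact hpfix
        rw [e1, heq]
        exact e2
      have hlt : a + (p - b) < p := by omega
      have hpos : 0 < a + (p - b) := by omega
      exact Nat.find_min hP hlt ⟨hpos, h1⟩
    intro a b ha hb heq
    rcases lt_trichotomy a b with h | h | h
    · exact absurd heq (key a b h hb)
    · exact h
    · exact absurd heq.symm (key b a h ha)
  obtain ⟨k, hk⟩ : ∃ k, p = k + 1 := ⟨p - 1, by omega⟩
  set tvs : Fin (k + 1) → {v : V // v ∈ S} := fun i => u (k - i.val) with htvsdef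
  have htvsinj : Function.Injective tvs := by
    intro i j hij
    have := huinj (k - i.val) (k - j.val) (by omega) (by omega) hij
    have hi := i.isLt
    have hj := j.isLt
    exact Fin.ext (by omega)
  refine ⟨k, fun i => (tvs i).1, fun i => ed (tvs (i + 1)).1 (tvs (i + 1)).2, ?_, ?_, ?_⟩
  · intro i j hij
    exact htvsinj (Subtype.ext hij)
  · intro i j hij
    have hij' : ed (tvs (i+1)).1 (tvs (i+1)).2 = ed (tvs (j+1)).1 (tvs (j+1)).2 := hij
    have : (tvs (i+1)).1 = (tvs (j+1)).1 := by
      rw [← hed1 (tvs (i+1)).1 (tvs (i+1)).2, ← hed1 (tvs (j+1)).1 (tvs (j+1)).2, hij']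
    have := htvsinj (Subtype.ext this)
    exact add_right_cancel this
  · intro i
    refine ⟨?_, hed1 _ _⟩
    -- tail (es i) = vs i
    have hfstep : ∀ t : {v : V // v ∈ S}, O.tail (ed t.1 t.2) = (f t).1 := fun t => rfl
    have hfu : ∀ j, f (u j) = u (j + 1) := by
      intro j
      show f (f^[j] y) = f^[j+1] y
      rw [Function.iterate_succ_apply']
    show O.tail (ed (tvs (i + 1)).1 (tvs (i + 1)).2) = (tvs i).1
    rw [hfstep]
    show (f (u (k - ((i + 1 : Fin (k+1))).val))).1 = (u (k - i.val)).1
    rw [hfu]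
    have hgoal : u (k - ((i + 1 : Fin (k+1))).val + 1) = u (k - i.val) := by
      rcases Nat.lt_or_ge i.val k with hik | hik
      · have hine : i ≠ Fin.last k := by
          intro hcon
          rw [hcon] at hik
          simp at hik
        have hval : ((i + 1 : Fin (k+1))).val = i.val + 1 := by
          rw [Fin.val_add_one, if_neg hine]
        rw [hval]
        congr 1
        omega
      · have hik' : i.val = k := by have := i.isLt; omega
        have hine : i = Fin.last k := Fin.ext (by simp [hik'])
        have hval : ((i + 1 : Fin (k+1))).val = 0 := by
          rw [Fin.val_add_one, if_pos hine]
        rw [hval, hik']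
        have := hup 0
        rw [Nat.zero_add, hk] at this
        simpa using this
    rw [hgoal]

end GraphOrientation

/-- For an orientation `O` of a connected weighted multigraph with
nonempty vertex set, the following are equivalent: (i) there is a nonempty `S ⊆ V`
with connected induced subgraph, cut directed towards `S`, and
`g_v - 1 + indeg_{O,S}(v) ≥ 0` for all `v ∈ S`; (ii) some vertex has weight at least 1,
or `O` has a directed cycle. -/
theorem exists_good_subset_iff_weight_or_cycle
    (G : Multigraph V E) (w : V → ℕ) (hG : G.Connected) (O : GraphOrientation G) :
    (∃ S : Finset V, S.Nonempty ∧ G.ConnectedOn S ∧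
      (∀ e, G.InCut S e → O.head e ∈ S) ∧
      ∀ v ∈ S, 0 ≤ (w v : ℤ) - 1 +
        ((univ.filter fun e => O.head e = v ∧ G.fst e ∈ S ∧ G.snd e ∈ S).card : ℤ)) ↔
    ((∃ v, 1 ≤ w v) ∨ O.HasDirectedCycle) := by
  constructor
  · rintro ⟨S, hSne, _hconn, _hcut, hdeg⟩
    by_cases hw : ∃ v, 1 ≤ w v
    · exact Or.inl hw
    · push_neg at hw
      refine Or.inr (O.hasDirectedCycle_of_in_edges S hSne ?_)
      intro v hv
      have hwv : w v = 0 := by have := hw v; omega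
      have hd := hdeg v hv
      rw [hwv] at hd
      have hcard : 1 ≤ (univ.filter fun e => O.head e = v ∧ G.fst e ∈ S ∧ G.snd e ∈ S).card := by
        omega
      obtain ⟨e, he⟩ := Finset.card_pos.1 hcard
      simp only [Finset.mem_filter, Finset.mem_univ, true_and] at he
      exact ⟨e, he.1, ((O.ends_iff e S).1 ⟨he.2.1, he.2.2⟩).1⟩
  · rintro (⟨v₀, hv₀⟩ | ⟨k, vs, es, hvs, hes, hstep⟩)
    · exact O.good_subset_of w v₀ (Or.inl hv₀)
    · refine O.good_subset_of w (vs 0) (Or.inr ⟨es (Fin.last k), ?_, ?_⟩)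
      · rw [(hstep (Fin.last k)).2]
        congr 1
        simp
      · rw [(hstep (Fin.last k)).1]
        have key : ∀ j : ℕ, ∀ _hj : j ≤ k, Relation.ReflTransGen O.Step (vs 0) (vs ⟨j, by omega⟩) := by
          intro j
          induction j with
          | zero =>
            intro _
            have : (⟨0, by omega⟩ : Fin (k+1)) = 0 := rfl
            rw [this]
          | succ m ih =>
            intro hm
            have hstep' := hstep ⟨m, by omega⟩
            have hval : (⟨m, by omega⟩ + 1 : Fin (k+1)) = ⟨m + 1, by omega⟩ := by
              have : (⟨m, by omega⟩ : Fin (k+1)) ≠ Fin.last k := by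
                intro hcon
                have := congrArg Fin.val hcon
                simp at this
                omega
              apply Fin.ext
              rw [Fin.val_add_one, if_neg this]
            rw [hval] at hstep'
            exact (ih (by omega)).tail ⟨es ⟨m, by omega⟩, hstep'.1, hstep'.2⟩
        have := key k (le_refl k)
        have hlast : (⟨k, by omega⟩ : Fin (k+1)) = Fin.last k := rfl
        rw [hlast] at this
        exact this
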